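/- (Elimination condition in Rank-Search.) Assume the uniform estimation event |p̂ i − p i| ≤ γ for all arms, the score-separation assumption (every positive arm's Borda score exceeds every negative arm's), and that binary search on the rank-sorted list returns a boundary b such that arm i_{b+1} is truly positive and arm i_b is truly negative. Then every arm i with Δ̄ᶜ i > 4γ is labeled in this round: if i is positive, then p̂ i − p̂(i_{b+1}) > 2γ, and if i is negative, then p̂ i − p̂(i_b) < −2γ. -/
import Mathlib


/-- The gap `Δ̄ᶜ i`: for a positive arm `i` (`μ i ≥ τ`), the max over positive arms `j` of
`min (p j - p i_l) (p i - p j)`; for a negative arm, the max over negative arms `j` of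
`min (p j - p i) (p i_u - p j)`. -/
noncomputable def deltaBar (K : ℕ) (μ : Fin K → ℝ) (τ : ℝ) (p : Fin K → ℝ)
    (i_u i_l : Fin K) (i : Fin K) : ℝ :=
  if τ ≤ μ i then
    sSup {x | ∃ j, τ ≤ μ j ∧ x = min (p j - p i_l) (p i - p j)}
  else
    sSup {x | ∃ j, μ j < τ ∧ x = min (p j - p i) (p i_u - p j)}

/-- Elimination condition in Rank-Search. Assume the uniform estimation event
`|p̂ i - p i| ≤ γ`, the score-separation assumption, and that binary search on the list
sorted by `p̂` returns a boundary with adjacent arms `i_b` (truly negative) and `i_{b+1}`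
(truly positive). Then every arm `i ∉ {i_u, i_l}` with `Δ̄ᶜ i > 4γ` is labeled in this round:
if `i` is positive then `p̂ i - p̂ i_{b+1} > 2γ`, and if `i` is negative then
`p̂ i - p̂ i_b < -2γ`. -/
theorem rank_search_elimination (K : ℕ) (μ : Fin K → ℝ) (τ : ℝ)
    (p phat : Fin K → ℝ) (γ : ℝ) (hγ : 0 < γ)
    (hsep : ∀ i j, τ ≤ μ i → μ j < τ → p j < p i)
    (hest : ∀ i, |phat i - p i| ≤ γ)
    (i_u i_l : Fin K)
    (hu_pos : τ ≤ μ i_u) (hl_neg : μ i_l < τ)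
    (hu_min : ∀ i, τ ≤ μ i → p i_u ≤ p i)
    (hl_max : ∀ i, μ i < τ → p i ≤ p i_l)
    (ib ib1 : Fin K)
    (hib_neg : μ ib < τ) (hib1_pos : τ ≤ μ ib1)
    (hb_le : phat ib ≤ phat ib1)
    (hadj : ∀ j, phat j < phat ib1 → phat j ≤ phat ib) :
    ∀ i, i ≠ i_u → i ≠ i_l → 4 * γ < deltaBar K μ τ p i_u i_l i →
      (τ ≤ μ i → 2 * γ < phat i - phat ib1) ∧
      (μ i < τ → phat i - phat ib < -(2 * γ)) := by
  intro i _ _ hΔ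
  have hesti := abs_le.1 (hest i)
  have hestib := abs_le.1 (hest ib)
  have hestib1 := abs_le.1 (hest ib1)
  constructor
  · intro hpos
    rw [deltaBar, if_pos hpos] at hΔ
    have hne : Set.Nonempty {x | ∃ j, τ ≤ μ j ∧ x = min (p j - p i_l) (p i - p j)} :=
      ⟨min (p i_u - p i_l) (p i - p i_u), i_u, hu_pos, rfl⟩
    obtain ⟨x, ⟨j, hjpos, rfl⟩, hx⟩ := exists_lt_of_lt_csSup hne hΔ
    have h1 : 4 * γ < p j - p i_l := lt_of_lt_of_le hx (min_le_left _ _)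
    have h2 : 4 * γ < p i - p j := lt_of_lt_of_le hx (min_le_right _ _)
    have hestj := abs_le.1 (hest j)
    have hib_l : p ib ≤ p i_l := hl_max ib hib_neg
    have hjb : phat ib < phat j := by nlinarith [hestj.1, hestib.2]
    have hj1 : phat ib1 ≤ phat j := by
      by_contra h
      exact absurd (hadj j (lt_of_not_ge h)) (not_le.2 hjb)
    nlinarith [hesti.1, hestj.2]
  · intro hneg
    rw [deltaBar, if_neg (not_le.2 hneg)] at hΔ
    have hne : Set.Nonempty {x | ∃ j, μ j < τ ∧ x = min (p j - p i) (p i_u - p j)} :=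
      ⟨min (p i - p i) (p i_u - p i), i, hneg, rfl⟩
    obtain ⟨x, ⟨j, hjneg, rfl⟩, hx⟩ := exists_lt_of_lt_csSup hne hΔ
    have h1 : 4 * γ < p j - p i := lt_of_lt_of_le hx (min_le_left _ _)
    have h2 : 4 * γ < p i_u - p j := lt_of_lt_of_le hx (min_le_right _ _)
    have hestj := abs_le.1 (hest j)
    have hib1_u : p i_u ≤ p ib1 := hu_min ib1 hib1_pos
    have hjb1 : phat j < phat ib1 := by nlinarith [hestj.2, hestib1.1]
    have hjb : phat j ≤ phat ib := hadj j hjb1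
    nlinarith [hesti.2, hestj.1]
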